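/- arXiv:1708.03430 — 5 statements merged into one kernel-verified Lean document; each statement's English description precedes it below -/
import Mathlib

section
/- (Proposition 2: the generalized Clifford torus is helicoidal in the sphere.) Let p ≥ 1, and let Σ = {(x,y) ∈ ℝ^{p+1} × ℝ^{p+1} : ‖x‖ = ‖y‖ = 1/√2}, D₁ = {(x,y) ∈ S^{2p+1} : ‖x‖ < 1/√2}, D₂ = {(x,y) ∈ S^{2p+1} : ‖x‖ > 1/√2}. Then for every point q ∈ Σ there exists an orthogonal transformation A ∈ O(2p+2) such that A q = q, A(Σ) = Σ, A(D₁) = D₂, and A(D₂) = D₁. -/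
noncomputable section

/-- `ℝ^{p+1}` as a Euclidean space. -/
abbrev E (p : ℕ) := EuclideanSpace ℝ (Fin (p + 1))

/-- `ℝ^{2p+2}` identified with `ℝ^{p+1} × ℝ^{p+1}`, with the Euclidean (`L²`) norm. -/
abbrev EE (p : ℕ) := WithLp 2 (E p × E p)

/-- The first factor `x` of a point `(x, y) ∈ ℝ^{p+1} × ℝ^{p+1}`. -/
def fstE {p : ℕ} (v : EE p) : E p := (WithLp.equiv 2 (E p × E p) v).1

/-- The second factor `y` of a point `(x, y) ∈ ℝ^{p+1} × ℝ^{p+1}`. -/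
def sndE {p : ℕ} (v : EE p) : E p := (WithLp.equiv 2 (E p × E p) v).2

/-- The generalized Clifford torus `Σ = {(x,y) : ‖x‖ = ‖y‖ = 1/√2} ⊆ S^{2p+1}`. -/
def cliffordTorus (p : ℕ) : Set (EE p) :=
  {v | ‖fstE v‖ = (Real.sqrt 2)⁻¹ ∧ ‖sndE v‖ = (Real.sqrt 2)⁻¹}

/-- The domain `D₁ = {(x,y) ∈ S^{2p+1} : ‖x‖ < 1/√2}`. -/
def domD1 (p : ℕ) : Set (EE p) := {v | ‖v‖ = 1 ∧ ‖fstE v‖ < (Real.sqrt 2)⁻¹}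

/-- The domain `D₂ = {(x,y) ∈ S^{2p+1} : ‖x‖ > 1/√2}`. -/
def domD2 (p : ℕ) : Set (EE p) := {v | ‖v‖ = 1 ∧ (Real.sqrt 2)⁻¹ < ‖fstE v‖}

/-- The isometry `(x, y) ↦ (B y, B x)` of `ℝ^{p+1} × ℝ^{p+1}` built from an
isometry `B` of the factor `ℝ^{p+1}`. -/
def swapIso {p : ℕ} (B : E p ≃ₗᵢ[ℝ] E p) : EE p ≃ₗᵢ[ℝ] EE p :=
  { toLinearEquiv :=
      (WithLp.linearEquiv 2 ℝ (E p × E p)).trans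
        ((LinearEquiv.prodComm ℝ (E p) (E p)).trans
          ((B.toLinearEquiv.prodCongr B.toLinearEquiv).trans
            (WithLp.linearEquiv 2 ℝ (E p × E p)).symm))
    norm_map' := by
      intro v
      rw [WithLp.prod_norm_eq_of_L2, WithLp.prod_norm_eq_of_L2]
      simp [add_comm] }

theorem swapIso_fst {p : ℕ} (B : E p ≃ₗᵢ[ℝ] E p) (v : EE p) :
    fstE (swapIso B v) = B (sndE v) := rfl

theorem swapIso_snd {p : ℕ} (B : E p ≃ₗᵢ[ℝ] E p) (v : EE p) :
    sndE (swapIso B v) = B (fstE v) := rfl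

theorem EE.ext' {p : ℕ} {u v : EE p} (h1 : fstE u = fstE v) (h2 : sndE u = sndE v) :
    u = v := (WithLp.equiv 2 (E p × E p)).injective (Prod.ext h1 h2)

theorem norm_sq_split {p : ℕ} (v : EE p) : ‖v‖ ^ 2 = ‖fstE v‖ ^ 2 + ‖sndE v‖ ^ 2 :=
  WithLp.prod_norm_sq_eq_of_L2 v

/-- the key arithmetic fact -/
theorem key_lt {a b : ℝ} (ha : 0 ≤ a) (hb : 0 ≤ b) (h : a ^ 2 + b ^ 2 = 1) :
    (a < (Real.sqrt 2)⁻¹ ↔ (Real.sqrt 2)⁻¹ < b) := by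
  have h2 : ((Real.sqrt 2)⁻¹ : ℝ) ^ 2 = 1 / 2 := by
    rw [inv_pow, Real.sq_sqrt (by norm_num : (0:ℝ) ≤ 2)]; norm_num
  have hc : (0:ℝ) ≤ (Real.sqrt 2)⁻¹ := by positivity
  constructor
  · intro hlt
    have : a ^ 2 < 1 / 2 := by
      calc a ^ 2 < (Real.sqrt 2)⁻¹ ^ 2 := by
            exact pow_lt_pow_left₀ hlt ha (by norm_num)
        _ = 1 / 2 := h2
    have hb2 : (Real.sqrt 2)⁻¹ ^ 2 < b ^ 2 := by rw [h2]; linarith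
    exact lt_of_pow_lt_pow_left₀ 2 hb hb2
  · intro hlt
    have : (Real.sqrt 2)⁻¹ ^ 2 < b ^ 2 := pow_lt_pow_left₀ hlt hc (by norm_num)
    have ha2 : a ^ 2 < (Real.sqrt 2)⁻¹ ^ 2 := by rw [h2] at this ⊢; linarith
    exact lt_of_pow_lt_pow_left₀ 2 hc ha2

/-- (Proposition 2) The generalized Clifford torus `Σ` is helicoidal in `S^{2p+1}`:
at every point `q ∈ Σ` there is an orthogonal transformation `A ∈ O(2p+2)` with
`A q = q`, `A(Σ) = Σ`, `A(D₁) = D₂`, and `A(D₂) = D₁`. -/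
theorem cliffordTorus_helicoidal (p : ℕ) (hp : 1 ≤ p)
    (q : EE p) (hq : q ∈ cliffordTorus p) :
    ∃ A : EE p ≃ₗᵢ[ℝ] EE p,
      A q = q ∧
      A '' cliffordTorus p = cliffordTorus p ∧
      A '' domD1 p = domD2 p ∧
      A '' domD2 p = domD1 p := by
  obtain ⟨hx, hy⟩ := hq
  set x := fstE q with hxdef
  set y := sndE q with hydef
  have hnorm : ‖x‖ = ‖y‖ := by rw [hx, hy]
  set B : E p ≃ₗᵢ[ℝ] E p := Submodule.reflection (ℝ ∙ (x - y))ᗮ with hBdef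
  have hBx : B x = y := Submodule.reflection_sub hnorm
  have hBy : B y = x := by
    have h := Submodule.reflection_reflection (ℝ ∙ (x - y))ᗮ x
    rw [hBx] at h; exact h
  set A := swapIso B with hAdef
  -- A is an involution
  have hAA : ∀ v : EE p, A (A v) = v := by
    intro v
    refine EE.ext' ?_ ?_
    · rw [swapIso_fst, swapIso_snd, Submodule.reflection_reflection]
    · rw [swapIso_snd, swapIso_fst, Submodule.reflection_reflection]
  have hnB : ∀ z : E p, ‖B z‖ = ‖z‖ := fun z => B.norm_map z
  -- membership transformations
  have hTor : ∀ v ∈ cliffordTorus p, A v ∈ cliffordTorus p := by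
    rintro v ⟨h1, h2⟩
    exact ⟨by rw [swapIso_fst, hnB]; exact h2, by rw [swapIso_snd, hnB]; exact h1⟩
  have hkey : ∀ v : EE p, ‖v‖ = 1 →
      (‖fstE v‖ < (Real.sqrt 2)⁻¹ ↔ (Real.sqrt 2)⁻¹ < ‖sndE v‖) := by
    intro v hv
    have h := norm_sq_split v
    rw [hv] at h
    exact key_lt (norm_nonneg _) (norm_nonneg _) (by linarith)
  have hD12 : ∀ v ∈ domD1 p, A v ∈ domD2 p := by
    rintro v ⟨h1, h2⟩
    refine ⟨by rw [A.norm_map]; exact h1, ?_⟩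
    rw [swapIso_fst, hnB]
    exact (hkey v h1).mp h2
  have hD21 : ∀ v ∈ domD2 p, A v ∈ domD1 p := by
    rintro v ⟨h1, h2⟩
    refine ⟨by rw [A.norm_map]; exact h1, ?_⟩
    rw [swapIso_fst, hnB]
    have h := norm_sq_split v
    rw [h1] at h
    have h2' : ‖sndE v‖ < (Real.sqrt 2)⁻¹ := by
      by_contra hcon
      push_neg at hcon
      rcases lt_or_eq_of_le hcon with hlt | heq
      · have := (hkey v h1).mpr hlt
        exact absurd h2 (not_lt.mpr (le_of_lt this))
      · -- ‖sndE v‖ = (√2)⁻¹, so ‖fstE v‖ = (√2)⁻¹ too, contradiction with h2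
        have hsq : ((Real.sqrt 2)⁻¹ : ℝ) ^ 2 = 1 / 2 := by
          rw [inv_pow, Real.sq_sqrt (by norm_num : (0:ℝ) ≤ 2)]; norm_num
        rw [← heq, hsq] at h
        have hf : ‖fstE v‖ ^ 2 = 1 / 2 := by linarith
        have hc : (0:ℝ) ≤ (Real.sqrt 2)⁻¹ := by positivity
        nlinarith [h2, hsq, hf]
    exact h2'
  -- images via involution
  have himg : ∀ S T : Set (EE p), (∀ v ∈ S, A v ∈ T) → (∀ v ∈ T, A v ∈ S) →
      A '' S = T := by
    intro S T hST hTS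
    apply Set.eq_of_subset_of_subset
    · rintro _ ⟨v, hv, rfl⟩; exact hST v hv
    · intro v hv
      exact ⟨A v, hTS v hv, hAA v⟩
  refine ⟨A, ?_, himg _ _ hTor hTor, himg _ _ hD12 hD21, himg _ _ hD21 hD12⟩
  refine EE.ext' ?_ ?_
  · rw [swapIso_fst]; exact hBy
  · rw [swapIso_snd]; exact hBx
end
end

section
/- (Helicoidal property underlying Tkachev's theorem.) Equip the space M_n of n × n real matrices with the Frobenius inner product ⟨X,Y⟩ = tr(XᵀY), and let Σ = {X ∈ M_n : det X = 0}, D₊ = {X ∈ M_n : det X > 0}, D₋ = {X ∈ M_n : det X < 0}. Then for every X ∈ Σ there exists a linear isometry φ of M_n (namely φ(Y) = A·Y for a suitable A ∈ O(n) with det A = −1) such that φ(X) = X, φ(Σ) = Σ, φ(D₊) = D₋, and φ(D₋) = D₊. -/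
open Matrix

/-- (Helicoidal property underlying Tkachev's theorem.) For every `X` in
`Σ = {det = 0} ⊆ M_n`, there is a linear isometry `φ` of `M_n` with the Frobenius
inner product `⟨X,Y⟩ = tr(XᵀY)` — namely `φ(Y) = A·Y` for a suitable `A ∈ O(n)`
with `det A = -1` — such that `φ(X) = X`, `φ(Σ) = Σ`, `φ(D₊) = D₋` and `φ(D₋) = D₊`,
where `D₊ = {det > 0}` and `D₋ = {det < 0}`. -/
theorem det_zero_set_helicoidal (n : ℕ) (X : Matrix (Fin n) (Fin n) ℝ) (hX : X.det = 0) :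
    ∃ A : Matrix (Fin n) (Fin n) ℝ, Aᵀ * A = 1 ∧ A.det = -1 ∧
      (∀ Y Z : Matrix (Fin n) (Fin n) ℝ,
        Matrix.trace ((A * Y)ᵀ * (A * Z)) = Matrix.trace (Yᵀ * Z)) ∧
      A * X = X ∧
      (fun Y => A * Y) '' {Y : Matrix (Fin n) (Fin n) ℝ | Y.det = 0} = {Y | Y.det = 0} ∧
      (fun Y => A * Y) '' {Y : Matrix (Fin n) (Fin n) ℝ | 0 < Y.det} = {Y | Y.det < 0} ∧
      (fun Y => A * Y) '' {Y : Matrix (Fin n) (Fin n) ℝ | Y.det < 0} = {Y | 0 < Y.det} := by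
  -- Get a nonzero vector `v` in the left kernel of `X`.
  obtain ⟨v, hv0, hv⟩ : ∃ v ≠ 0, Xᵀ *ᵥ v = 0 :=
    Matrix.exists_mulVec_eq_zero_iff.mpr (by rwa [Matrix.det_transpose])
  set s : ℝ := v ⬝ᵥ v with hs
  have hs0 : s ≠ 0 := fun h => hv0 (dotProduct_self_eq_zero.mp h)
  set c : ℝ := 2 / s with hc
  set P : Matrix (Fin n) (Fin n) ℝ := vecMulVec v v with hP
  set A : Matrix (Fin n) (Fin n) ℝ := 1 - c • P with hA
  have hPt : Pᵀ = P := by ext i j; simp [hP, vecMulVec_apply, mul_comm]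
  have hAt : Aᵀ = A := by rw [hA, transpose_sub, transpose_one, transpose_smul, hPt]
  have hPP : P * P = s • P := by
    ext i j
    simp [hP, vecMulVec_apply, mul_apply, hs, dotProduct, Finset.mul_sum, Finset.sum_mul]
    congr 1; ext k; ring
  have hcs : c * s = 2 := by rw [hc, div_mul_cancel₀ 2 hs0]
  have htt : (c • P) * (c • P) = (2 * c) • P := by
    rw [smul_mul_assoc, mul_smul_comm, hPP, smul_smul, smul_smul]
    congr 1
    rw [mul_assoc, hcs]
    ring
  have hAA : A * A = 1 := by
    rw [hA, sub_mul, mul_sub, mul_sub, one_mul, mul_one, htt, two_mul, add_smul]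
    rw [one_mul]
    abel
  have hdet : A.det = -1 := by
    have : A = 1 + replicateCol (Fin 1) ((-c) • v) * replicateRow (Fin 1) v := by
      erw [hA, ← vecMulVec_eq (Fin 1), sub_eq_add_neg]
      congr 1
      ext i j
      simp [hP, vecMulVec_apply]
      ring
    erw [this, det_one_add_replicateCol_mul_replicateRow]
    simp [dotProduct_smul, ← hs, smul_eq_mul]
    rw [hcs]
    norm_num
  have hPX : P * X = 0 := by
    ext i j
    have := congrFun hv j
    simp [mulVec, dotProduct, mul_apply, transpose_apply] at this
    simp [hP, vecMulVec_apply, mul_apply, mul_assoc, ← Finset.mul_sum]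
    right
    simpa [mul_comm] using this
  have hAX : A * X = X := by
    rw [hA, sub_mul, one_mul, smul_mul_assoc, hPX, smul_zero, sub_zero]
  have hdetmul : ∀ Y : Matrix (Fin n) (Fin n) ℝ, (A * Y).det = -Y.det := by
    intro Y; rw [det_mul, hdet]; ring
  have hinv : ∀ Y : Matrix (Fin n) (Fin n) ℝ, A * (A * Y) = Y := by
    intro Y; rw [← mul_assoc, hAA, one_mul]
  refine ⟨A, by rw [hAt, hAA], hdet, ?_, hAX, ?_, ?_, ?_⟩
  · intro Y Z
    rw [transpose_mul, mul_assoc, ← mul_assoc Aᵀ, hAt, hAA, one_mul]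
  · ext Y
    constructor
    · rintro ⟨W, hW, rfl⟩
      simp only [Set.mem_setOf_eq] at hW ⊢
      rw [hdetmul, hW, neg_zero]
    · intro hY
      exact ⟨A * Y, by simp only [Set.mem_setOf_eq] at hY ⊢; rw [hdetmul, hY, neg_zero],
        hinv Y⟩
  · ext Y
    constructor
    · rintro ⟨W, hW, rfl⟩
      simp only [Set.mem_setOf_eq] at hW ⊢
      rw [hdetmul]; linarith
    · intro hY
      refine ⟨A * Y, ?_, hinv Y⟩
      simp only [Set.mem_setOf_eq] at hY ⊢
      rw [hdetmul]; linarith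
  · ext Y
    constructor
    · rintro ⟨W, hW, rfl⟩
      simp only [Set.mem_setOf_eq] at hW ⊢
      rw [hdetmul]; linarith
    · intro hY
      refine ⟨A * Y, ?_, hinv Y⟩
      simp only [Set.mem_setOf_eq] at hY ⊢
      rw [hdetmul]; linarith
end

section
/- (Vanishing mean curvature of the determinant cone, Hessian form.) For every n × n real matrix X with det X = 0, the Hessian of the determinant function at X annihilates its own gradient direction: D²det(X)(G, G) = 0, where G = (adj X)ᵀ is the transpose of the adjugate (cofactor) matrix of X, which is the gradient of det at X with respect to the Frobenius inner product. Together with the harmonicity of det, this expresses that the level set {det = 0} is a minimal hypercone in ℝ^{n²} at every point where its gradient is nonzero. -/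
open Matrix

-- Equip `M_n ≅ ℝ^{n²}` with the Frobenius norm (the Euclidean norm coming from the
-- Frobenius inner product `⟨X,Y⟩ = tr(XᵀY)`).
attribute [local instance] Matrix.frobeniusNormedAddCommGroup Matrix.frobeniusNormedSpace

/-! ### Algebraic part -/

/-- If `det X = 0` then all `2 × 2` minors of the adjugate of `X` vanish. -/
theorem adjugate_minor_eq {n : ℕ} (X : Matrix (Fin n) (Fin n) ℝ) (hX : X.det = 0)
    (i k j l : Fin n) :
    X.adjugate i j * X.adjugate k l = X.adjugate i l * X.adjugate k j := by
  classical
  by_contra hδ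
  set B := X.adjugate with hB
  -- columns of the adjugate are in the kernel of `X`
  have hXB : X * B = 0 := by rw [hB, Matrix.mul_adjugate, hX, zero_smul]
  have hcol : ∀ c : Fin n, X *ᵥ (fun r => B r c) = 0 := by
    intro c
    funext p
    have : (X * B) p c = 0 := by rw [hXB]; rfl
    simpa [Matrix.mulVec, Matrix.mul_apply, dotProduct] using this
  -- a nonzero kernel vector of `X` whose `p`-th coordinate vanishes kills all
  -- cofactors `B p q`.
  have key : ∀ (u : Fin n → ℝ) (p q : Fin n), u ≠ 0 → X *ᵥ u = 0 → u p = 0 → B p q = 0 := by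
    intro u p q hu hXu hup
    have hker : (X.updateRow q (Pi.single p 1)) *ᵥ u = 0 := by
      funext r
      by_cases hr : r = q
      · subst hr
        have hrow : (X.updateRow r (Pi.single p 1)) r = Pi.single p 1 :=
          Matrix.updateRow_self
        simp [Matrix.mulVec, hrow, Pi.single_apply, dotProduct, hup]
      · have hrow : (X.updateRow q (Pi.single p 1)) r = X r := Matrix.updateRow_ne hr
        have := congrFun hXu r
        simpa [Matrix.mulVec, dotProduct, hrow] using this
    have hdet : (X.updateRow q (Pi.single p 1)).det = 0 := by
      by_contra hne
      exact hu (Matrix.eq_zero_of_mulVec_eq_zero hne hker)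
    rw [hB, Matrix.adjugate_apply, hdet]
  -- show every entry of `B` vanishes, a contradiction
  have hall : ∀ p q : Fin n, B p q = 0 := by
    intro p q
    by_cases hp : B p j = 0 ∧ B p l = 0
    · -- use the `j`-th column of `B`
      refine key (fun r => B r j) p q ?_ (hcol j) hp.1
      intro h0
      have hi : B i j = 0 := congrFun h0 i
      have hk : B k j = 0 := congrFun h0 k
      exact hδ (by rw [hi, hk]; ring)
    · -- use the combination `B p l • col j - B p j • col l`
      set u : Fin n → ℝ := fun r => B p l * B r j - B p j * B r l with hu_def
      have hXu : X *ᵥ u = 0 := by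
        have : u = B p l • (fun r => B r j) - B p j • (fun r => B r l) := by
          funext r; simp [hu_def]
        rw [this, Matrix.mulVec_sub, Matrix.mulVec_smul, Matrix.mulVec_smul, hcol j, hcol l]
        simp
      have hup : u p = 0 := by simp [hu_def]; ring
      have hu : u ≠ 0 := by
        intro h0
        have hi : B p l * B i j - B p j * B i l = 0 := congrFun h0 i
        have hk : B p l * B k j - B p j * B k l = 0 := congrFun h0 k
        have hδ' : B i j * B k l - B i l * B k j ≠ 0 := sub_ne_zero_of_ne hδ
        have h1 : B p l * (B i j * B k l - B i l * B k j) = 0 := by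
          linear_combination B k l * hi - B i l * hk
        have h2 : B p j * (B i j * B k l - B i l * B k j) = 0 := by
          linear_combination B k j * hi - B i j * hk
        have hbl : B p l = 0 := by
          rcases mul_eq_zero.mp h1 with h | h
          · exact h
          · exact absurd h hδ'
        have hbj : B p j = 0 := by
          rcases mul_eq_zero.mp h2 with h | h
          · exact h
          · exact absurd h hδ'
        exact hp ⟨hbj, hbl⟩
      exact key u p q hu hXu hup
  exact hδ (by rw [hall i j, hall k l, hall i l, hall k j])

/-- A determinant with two (cross-)proportional updated rows vanishes. -/
theorem det_updateRow_updateRow_eq_zero {n : ℕ} (X : Matrix (Fin n) (Fin n) ℝ)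
    {i j : Fin n} (hij : i ≠ j) (u v : Fin n → ℝ)
    (huv : ∀ a b, u a * v b = v a * u b) :
    ((X.updateRow i u).updateRow j v).det = 0 := by
  classical
  by_cases hu : u = 0
  · apply Matrix.det_eq_zero_of_row_eq_zero i
    intro m
    have hrow : ((X.updateRow i u).updateRow j v) i = u := by
      rw [Matrix.updateRow_ne hij, Matrix.updateRow_self]
    rw [hrow, hu]; rfl
  · obtain ⟨a, ha⟩ : ∃ a, u a ≠ 0 := by
      by_contra h; push_neg at h; exact hu (funext h)
    have hv : v = (v a / u a) • u := by
      funext b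
      have h := huv a b
      have : v b = v a * u b / u a := by
        rw [eq_div_iff ha]; linear_combination h
      rw [this]; simp [div_mul_eq_mul_div]
    rw [hv, Matrix.det_updateRow_smul]
    have hzero : ((X.updateRow i u).updateRow j u).det = 0 := by
      apply Matrix.det_zero_of_row_eq hij
      rw [Matrix.updateRow_ne hij, Matrix.updateRow_self, Matrix.updateRow_self]
    rw [hzero, mul_zero]

/-! ### Analytic part : `det` as a continuous multilinear map of the rows -/

/-- `det` as a continuous multilinear map in the rows. -/
noncomputable def detCM (n : ℕ) :
    ContinuousMultilinearMap ℝ (fun _ : Fin n => (Fin n → ℝ)) ℝ :=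
  MultilinearMap.mkContinuous
    (Matrix.detRowAlternating : (Fin n → ℝ) [⋀^Fin n]→ₗ[ℝ] ℝ).toMultilinearMap
    ((Nat.factorial n : ℝ)) (fun m => by
      classical
      have h0 : (Matrix.detRowAlternating : (Fin n → ℝ) [⋀^Fin n]→ₗ[ℝ] ℝ).toMultilinearMap m
          = (Matrix.of m).det := rfl
      rw [h0, Matrix.det_apply]
      calc ‖∑ σ : Equiv.Perm (Fin n), Equiv.Perm.sign σ • ∏ x, Matrix.of m (σ x) x‖
          ≤ ∑ σ : Equiv.Perm (Fin n), ‖Equiv.Perm.sign σ • ∏ x, Matrix.of m (σ x) x‖ :=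
            norm_sum_le _ _
        _ ≤ ∑ _σ : Equiv.Perm (Fin n), ∏ x, ‖m x‖ := by
            refine Finset.sum_le_sum fun σ _ => ?_
            have hs : ‖Equiv.Perm.sign σ • ∏ x, Matrix.of m (σ x) x‖
                = ‖∏ x, m (σ x) x‖ := by
              rcases Int.units_eq_one_or (Equiv.Perm.sign σ) with h | h <;>
                simp [h, Matrix.of_apply]
            rw [hs]
            calc ‖∏ x, m (σ x) x‖ = ∏ x, ‖m (σ x) x‖ := norm_prod _ _
              _ ≤ ∏ x, ‖m (σ x)‖ := Finset.prod_le_prod (fun x _ => norm_nonneg _)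
                    (fun x _ => norm_le_pi_norm (m (σ x)) x)
              _ = ∏ x, ‖m x‖ := Equiv.prod_comp σ (fun x => ‖m x‖)
        _ = ((Nat.factorial n : ℝ)) * ∏ x, ‖m x‖ := by
            simp [Finset.sum_const, Finset.card_univ, Fintype.card_perm, Fintype.card_fin,
              nsmul_eq_mul])

lemma detCM_apply {n : ℕ} (m : Fin n → Fin n → ℝ) : detCM n m = (Matrix.of m).det := by
  have : ⇑(detCM n) = ⇑(Matrix.detRowAlternating :
      (Fin n → ℝ) [⋀^Fin n]→ₗ[ℝ] ℝ).toMultilinearMap :=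
    MultilinearMap.coe_mkContinuous _ _ _
  rw [this]
  rfl

/-- Extraction of the `i`-th row, as a continuous linear map (Frobenius norm). -/
noncomputable def rowCLM (n : ℕ) (i : Fin n) :
    Matrix (Fin n) (Fin n) ℝ →L[ℝ] (Fin n → ℝ) :=
  LinearMap.toContinuousLinearMap
    ((LinearMap.proj i).comp (Matrix.ofLinearEquiv ℝ).symm.toLinearMap)

lemma rowCLM_apply {n : ℕ} (i : Fin n) (Y : Matrix (Fin n) (Fin n) ℝ) :
    rowCLM n i Y = Y i := rfl

theorem det_hasFDerivAt {n : ℕ} (Y : Matrix (Fin n) (Fin n) ℝ) :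
    HasFDerivAt (Matrix.det : Matrix (Fin n) (Fin n) ℝ → ℝ)
      (∑ i, ((detCM n).toContinuousLinearMap (fun j => Y j) i) ∘L (rowCLM n i)) Y := by
  classical
  have h := HasFDerivAt.multilinear_comp (detCM n)
    (g := fun (i : Fin n) (Z : Matrix (Fin n) (Fin n) ℝ) => Z i)
    (g' := fun i => rowCLM n i) (x := Y)
    (fun i => (rowCLM n i).hasFDerivAt)
  have h2 : HasFDerivAt (fun Z : Matrix (Fin n) (Fin n) ℝ => detCM n (fun i => Z i))
      (∑ i, ((detCM n).toContinuousLinearMap (fun j => Y j) i) ∘L (rowCLM n i)) Y := h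
  have hfun : (fun Z : Matrix (Fin n) (Fin n) ℝ => detCM n (fun i => Z i))
      = (Matrix.det : Matrix (Fin n) (Fin n) ℝ → ℝ) := by
    funext Z
    rw [detCM_apply]
    rfl
  rw [hfun] at h2
  exact h2

theorem fderiv_det_apply {n : ℕ} (Y H : Matrix (Fin n) (Fin n) ℝ) :
    fderiv ℝ (Matrix.det : Matrix (Fin n) (Fin n) ℝ → ℝ) Y H
      = ∑ i, (Y.updateRow i (H i)).det := by
  classical
  rw [(det_hasFDerivAt Y).fderiv]
  rw [ContinuousLinearMap.sum_apply]
  refine Finset.sum_congr rfl fun i _ => ?_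
  rw [ContinuousLinearMap.comp_apply, ContinuousMultilinearMap.toContinuousLinearMap_apply,
    detCM_apply]
  rfl

theorem hessian_hasFDerivAt {n : ℕ} (G X : Matrix (Fin n) (Fin n) ℝ) :
    HasFDerivAt (fun Y : Matrix (Fin n) (Fin n) ℝ => ∑ i, (Y.updateRow i (G i)).det)
      (∑ i : Fin n, ∑ j : Fin n,
        ((detCM n).toContinuousLinearMap (fun k => if k = i then G i else X k) j) ∘L
          (if j = i then (0 : Matrix (Fin n) (Fin n) ℝ →L[ℝ] (Fin n → ℝ))
            else rowCLM n j)) X := by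
  classical
  apply HasFDerivAt.fun_sum
  intro i _
  have h := HasFDerivAt.multilinear_comp (detCM n)
    (g := fun (j : Fin n) (Y : Matrix (Fin n) (Fin n) ℝ) => if j = i then G i else Y j)
    (g' := fun j => if j = i then (0 : Matrix (Fin n) (Fin n) ℝ →L[ℝ] (Fin n → ℝ)) else rowCLM n j) (x := X)
    (fun j => by
      by_cases hj : j = i
      · simp only [hj, if_true]; exact hasFDerivAt_const (𝕜 := ℝ) (G i) X
      · simp only [hj, if_false]; exact (rowCLM n j).hasFDerivAt)
  have heq : (fun Y : Matrix (Fin n) (Fin n) ℝ =>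
      detCM n (fun j => if j = i then G i else Y j))
      = fun Y : Matrix (Fin n) (Fin n) ℝ => (Y.updateRow i (G i)).det := by
    funext Y
    rw [detCM_apply]
    congr 1
    funext j k
    by_cases hj : j = i <;> simp [Matrix.updateRow_apply, hj]
  rw [heq] at h
  exact h

/-- (Vanishing mean curvature of the determinant cone, Hessian form.) For every
`n × n` real matrix `X` with `det X = 0`, the Hessian of `det` at `X` annihilates the
gradient direction `G = (adj X)ᵀ` of `det` (with respect to the Frobenius inner
product): `D²det(X)(G, G) = 0`. -/
theorem hessian_det_on_gradient_vanishes (n : ℕ) (X : Matrix (Fin n) (Fin n) ℝ)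
    (hX : X.det = 0) :
    fderiv ℝ (fun Y : Matrix (Fin n) (Fin n) ℝ =>
        fderiv ℝ (Matrix.det : Matrix (Fin n) (Fin n) ℝ → ℝ) Y (X.adjugate)ᵀ)
      X (X.adjugate)ᵀ = 0 := by
  classical
  set G : Matrix (Fin n) (Fin n) ℝ := (X.adjugate)ᵀ with hG
  have hfun : (fun Y : Matrix (Fin n) (Fin n) ℝ =>
      fderiv ℝ (Matrix.det : Matrix (Fin n) (Fin n) ℝ → ℝ) Y G)
      = fun Y : Matrix (Fin n) (Fin n) ℝ => ∑ i, (Y.updateRow i (G i)).det :=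
    funext fun Y => fderiv_det_apply Y G
  rw [hfun, (hessian_hasFDerivAt G X).fderiv]
  rw [ContinuousLinearMap.sum_apply]
  refine Finset.sum_eq_zero fun i _ => ?_
  rw [ContinuousLinearMap.sum_apply]
  refine Finset.sum_eq_zero fun j _ => ?_
  rw [ContinuousLinearMap.comp_apply]
  by_cases hj : j = i
  · subst hj
    simp only [if_pos rfl, ContinuousLinearMap.zero_apply,
      ContinuousMultilinearMap.toContinuousLinearMap_apply]
    exact (detCM n).toMultilinearMap.map_update_zero _ _
  · rw [if_neg hj]
    rw [ContinuousMultilinearMap.toContinuousLinearMap_apply]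
    have hrows : Function.update (fun k => if k = i then G i else X k) j (rowCLM n j G)
        = fun k => ((X.updateRow i (G i)).updateRow j (G j)) k := by
      funext k
      by_cases hk : k = j
      · subst hk
        simp [Function.update_self, rowCLM_apply, Matrix.updateRow_self]
      · rw [Function.update_of_ne hk]
        by_cases hk' : k = i
        · subst hk'
          simp [Matrix.updateRow_apply, hk, hj]
        · simp [Matrix.updateRow_apply, hk, hk']
    rw [hrows]
    have hdet : detCM n (fun k => ((X.updateRow i (G i)).updateRow j (G j)) k)
        = ((X.updateRow i (G i)).updateRow j (G j)).det := by
      rw [detCM_apply]; rfl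
    rw [hdet]
    refine det_updateRow_updateRow_eq_zero X (fun h => hj h.symm) _ _ ?_
    intro a b
    have := adjugate_minor_eq X hX a b i j
    simpa [hG, Matrix.transpose_apply] using this
end

section
/- The Clifford torus is congruent to the zero-determinant set of 2 × 2 matrices intersected with the 3-sphere: there exists an orthogonal transformation A ∈ O(4) of ℝ⁴ mapping the set {x ∈ S³ : x₁x₄ − x₂x₃ = 0} onto the Clifford torus {x ∈ S³ : x₁² + x₂² = 1/2 and x₃² + x₄² = 1/2}. -/
noncomputable def cliffT : (Fin 4 → ℝ) → (Fin 4 → ℝ) := fun x =>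
  ![(x 0 + x 3)/Real.sqrt 2, (x 1 - x 2)/Real.sqrt 2,
    (x 0 - x 3)/Real.sqrt 2, (x 1 + x 2)/Real.sqrt 2]

noncomputable def cliffTinv : (Fin 4 → ℝ) → (Fin 4 → ℝ) := fun y =>
  ![(y 0 + y 2)/Real.sqrt 2, (y 1 + y 3)/Real.sqrt 2,
    (y 3 - y 1)/Real.sqrt 2, (y 0 - y 2)/Real.sqrt 2]

noncomputable def cliffE : EuclideanSpace ℝ (Fin 4) ≃ₗ[ℝ] EuclideanSpace ℝ (Fin 4) where
  toFun x := WithLp.toLp 2 (cliffT x)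
  invFun y := WithLp.toLp 2 (cliffTinv y)
  map_add' x y := by
    ext i; fin_cases i <;> simp [cliffT, EuclideanSpace, PiLp, WithLp] <;> ring
  map_smul' c x := by
    ext i; fin_cases i <;> simp [cliffT, EuclideanSpace, PiLp, WithLp] <;> ring
  left_inv x := by
    have h2 : Real.sqrt 2 * Real.sqrt 2 = 2 := Real.mul_self_sqrt (by norm_num)
    have h0 : Real.sqrt 2 ≠ 0 := by positivity
    ext i; fin_cases i <;> simp [cliffT, cliffTinv] <;> (field_simp; try ring_nf) <;> simp [Real.sq_sqrt]
  right_inv y := by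
    have h2 : Real.sqrt 2 * Real.sqrt 2 = 2 := Real.mul_self_sqrt (by norm_num)
    have h0 : Real.sqrt 2 ≠ 0 := by positivity
    ext i; fin_cases i <;> simp [cliffT, cliffTinv] <;> (field_simp; try ring_nf) <;> simp [Real.sq_sqrt]

theorem cliffE_norm (x : EuclideanSpace ℝ (Fin 4)) : ‖cliffE x‖ = ‖x‖ := by
  have h2 : Real.sqrt 2 * Real.sqrt 2 = 2 := Real.mul_self_sqrt (by norm_num)
  have h0 : Real.sqrt 2 ≠ 0 := by positivity
  rw [EuclideanSpace.norm_eq, EuclideanSpace.norm_eq]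
  congr 1
  simp only [Fin.sum_univ_four, Real.norm_eq_abs, sq_abs]
  show (cliffT x 0)^2 + (cliffT x 1)^2 + (cliffT x 2)^2 + (cliffT x 3)^2 = _
  simp only [cliffT, Matrix.cons_val_zero, Matrix.cons_val_one, Matrix.head_cons,
    Matrix.cons_val_two, Matrix.tail_cons, Matrix.cons_val_three]
  field_simp
  ring_nf
  simp [Real.sq_sqrt]

noncomputable def cliffIso : EuclideanSpace ℝ (Fin 4) ≃ₗᵢ[ℝ] EuclideanSpace ℝ (Fin 4) :=
  ⟨cliffE, cliffE_norm⟩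

theorem norm_one_iff (x : EuclideanSpace ℝ (Fin 4)) :
    ‖x‖ = 1 ↔ (x 0)^2 + (x 1)^2 + (x 2)^2 + (x 3)^2 = 1 := by
  rw [EuclideanSpace.norm_eq]
  simp only [Fin.sum_univ_four, Real.norm_eq_abs, sq_abs]
  exact Real.sqrt_eq_one

/-- The Clifford torus is congruent to the zero-determinant set of `2 × 2` matrices
intersected with `S³`: some orthogonal transformation `A ∈ O(4)` of `ℝ⁴` maps
`{x ∈ S³ : x₁x₄ − x₂x₃ = 0}` onto `{x ∈ S³ : x₁² + x₂² = 1/2 ∧ x₃² + x₄² = 1/2}`. -/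
theorem cliffordTorus_congruent_det_zero :
    ∃ A : EuclideanSpace ℝ (Fin 4) ≃ₗᵢ[ℝ] EuclideanSpace ℝ (Fin 4),
      A '' {x : EuclideanSpace ℝ (Fin 4) | ‖x‖ = 1 ∧ x 0 * x 3 - x 1 * x 2 = 0} =
        {x : EuclideanSpace ℝ (Fin 4) | ‖x‖ = 1 ∧
          x 0 ^ 2 + x 1 ^ 2 = 1 / 2 ∧ x 2 ^ 2 + x 3 ^ 2 = 1 / 2} := by
  have h2 : Real.sqrt 2 * Real.sqrt 2 = 2 := Real.mul_self_sqrt (by norm_num)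
  have h0 : Real.sqrt 2 ≠ 0 := by positivity
  refine ⟨cliffIso, ?_⟩
  ext y
  rw [Set.mem_image]
  constructor
  · rintro ⟨x, ⟨hn, hd⟩, rfl⟩
    have hx : (x 0)^2 + (x 1)^2 + (x 2)^2 + (x 3)^2 = 1 := (norm_one_iff x).mp hn
    refine ⟨?_, ?_, ?_⟩
    · rw [cliffIso.norm_map]; exact hn
    · show (cliffT x 0)^2 + (cliffT x 1)^2 = 1/2
      simp only [cliffT, Matrix.cons_val_zero, Matrix.cons_val_one, Matrix.head_cons,
        Matrix.cons_val_two, Matrix.tail_cons, Matrix.cons_val_three]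
      field_simp
      nlinarith [h2, hd, hx]
    · show (cliffT x 2)^2 + (cliffT x 3)^2 = 1/2
      simp only [cliffT, Matrix.cons_val_zero, Matrix.cons_val_one, Matrix.head_cons,
        Matrix.cons_val_two, Matrix.tail_cons, Matrix.cons_val_three]
      field_simp
      nlinarith [h2, hd, hx]
  · rintro ⟨hn, ha, hb⟩
    refine ⟨cliffIso.symm y, ⟨?_, ?_⟩, cliffIso.apply_symm_apply y⟩
    · rw [LinearIsometryEquiv.norm_map]; exact hn
    · have hsy : (cliffIso.symm y : Fin 4 → ℝ) = cliffTinv y := rfl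
      rw [hsy]
      simp only [cliffTinv, Matrix.cons_val_zero, Matrix.cons_val_one, Matrix.head_cons,
        Matrix.cons_val_two, Matrix.tail_cons, Matrix.cons_val_three]
      field_simp
      nlinarith [h2, ha, hb]
end

section
/- The product S²(1/√2) × S²(1/√2) is congruent in S⁵ to the set of singular 4 × 4 skew-symmetric matrices of unit norm: there exists an orthogonal transformation A ∈ O(6) of ℝ⁶ mapping the set {x ∈ S⁵ : x₁x₆ − x₂x₅ + x₃x₄ = 0} onto the set {x ∈ S⁵ : x₁² + x₂² + x₃² = 1/2 and x₄² + x₅² + x₆² = 1/2}. -/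
/-- The 45°-rotation in the three coordinate planes `(0,5)`, `(1,4)`, `(2,3)`. -/
noncomputable def Tfun (x : EuclideanSpace ℝ (Fin 6)) : EuclideanSpace ℝ (Fin 6) :=
  WithLp.toLp 2 ![(x 0 + x 5)/Real.sqrt 2, (x 1 - x 4)/Real.sqrt 2, (x 2 + x 3)/Real.sqrt 2,
    (x 0 - x 5)/Real.sqrt 2, (x 1 + x 4)/Real.sqrt 2, (x 2 - x 3)/Real.sqrt 2]

/-- The inverse of `Tfun`. -/
noncomputable def Sfun (y : EuclideanSpace ℝ (Fin 6)) : EuclideanSpace ℝ (Fin 6) :=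
  WithLp.toLp 2 ![(y 0 + y 3)/Real.sqrt 2, (y 1 + y 4)/Real.sqrt 2, (y 2 + y 5)/Real.sqrt 2,
    (y 2 - y 5)/Real.sqrt 2, (y 4 - y 1)/Real.sqrt 2, (y 0 - y 3)/Real.sqrt 2]

@[simp] lemma cons_val_five {α : Type*} (a b c d e f : α) :
    (![a,b,c,d,e,f] : Fin 6 → α) 5 = f := rfl

lemma s2 : Real.sqrt 2 ^ 2 = 2 := Real.sq_sqrt (by norm_num)
lemma smul2 : Real.sqrt 2 * Real.sqrt 2 = 2 := Real.mul_self_sqrt (by norm_num)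

lemma Tadd (x y : EuclideanSpace ℝ (Fin 6)) : Tfun (x + y) = Tfun x + Tfun y := by
  ext i
  have hx : ∀ j : Fin 6, (x + y) j = x j + y j := fun j => rfl
  have h2 : (Tfun x + Tfun y) i = Tfun x i + Tfun y i := rfl
  rw [h2]
  fin_cases i <;> simp [Tfun, hx] <;> ring

lemma Tsmul (c : ℝ) (x : EuclideanSpace ℝ (Fin 6)) : Tfun (c • x) = c • Tfun x := by
  ext i
  have hx : ∀ j : Fin 6, (c • x) j = c * x j := fun j => rfl
  have h2 : (c • Tfun x) i = c * Tfun x i := rfl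
  rw [h2]
  fin_cases i <;> simp [Tfun, hx] <;> ring

lemma STx (x : EuclideanSpace ℝ (Fin 6)) : Sfun (Tfun x) = x := by
  ext i
  have e0 : Tfun x 0 = (x 0 + x 5)/Real.sqrt 2 := rfl
  have e1 : Tfun x 1 = (x 1 - x 4)/Real.sqrt 2 := rfl
  have e2 : Tfun x 2 = (x 2 + x 3)/Real.sqrt 2 := rfl
  have e3 : Tfun x 3 = (x 0 - x 5)/Real.sqrt 2 := rfl
  have e4 : Tfun x 4 = (x 1 + x 4)/Real.sqrt 2 := rfl
  have e5 : Tfun x 5 = (x 2 - x 3)/Real.sqrt 2 := rfl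
  fin_cases i
  · show (Tfun x 0 + Tfun x 3)/Real.sqrt 2 = x 0
    rw [e0, e3, ← add_div, div_div, smul2]; ring
  · show (Tfun x 1 + Tfun x 4)/Real.sqrt 2 = x 1
    rw [e1, e4, ← add_div, div_div, smul2]; ring
  · show (Tfun x 2 + Tfun x 5)/Real.sqrt 2 = x 2
    rw [e2, e5, ← add_div, div_div, smul2]; ring
  · show (Tfun x 2 - Tfun x 5)/Real.sqrt 2 = x 3
    rw [e2, e5, div_sub_div_same, div_div, smul2]; ring
  · show (Tfun x 4 - Tfun x 1)/Real.sqrt 2 = x 4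
    rw [e4, e1, div_sub_div_same, div_div, smul2]; ring
  · show (Tfun x 0 - Tfun x 3)/Real.sqrt 2 = x 5
    rw [e0, e3, div_sub_div_same, div_div, smul2]; ring

lemma TSy (y : EuclideanSpace ℝ (Fin 6)) : Tfun (Sfun y) = y := by
  ext i
  have e0 : Sfun y 0 = (y 0 + y 3)/Real.sqrt 2 := rfl
  have e1 : Sfun y 1 = (y 1 + y 4)/Real.sqrt 2 := rfl
  have e2 : Sfun y 2 = (y 2 + y 5)/Real.sqrt 2 := rfl
  have e3 : Sfun y 3 = (y 2 - y 5)/Real.sqrt 2 := rfl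
  have e4 : Sfun y 4 = (y 4 - y 1)/Real.sqrt 2 := rfl
  have e5 : Sfun y 5 = (y 0 - y 3)/Real.sqrt 2 := rfl
  fin_cases i
  · show (Sfun y 0 + Sfun y 5)/Real.sqrt 2 = y 0
    rw [e0, e5, ← add_div, div_div, smul2]; ring
  · show (Sfun y 1 - Sfun y 4)/Real.sqrt 2 = y 1
    rw [e1, e4, div_sub_div_same, div_div, smul2]; ring
  · show (Sfun y 2 + Sfun y 3)/Real.sqrt 2 = y 2
    rw [e2, e3, ← add_div, div_div, smul2]; ring
  · show (Sfun y 0 - Sfun y 5)/Real.sqrt 2 = y 3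
    rw [e0, e5, div_sub_div_same, div_div, smul2]; ring
  · show (Sfun y 1 + Sfun y 4)/Real.sqrt 2 = y 4
    rw [e1, e4, ← add_div, div_div, smul2]; ring
  · show (Sfun y 2 - Sfun y 3)/Real.sqrt 2 = y 5
    rw [e2, e3, div_sub_div_same, div_div, smul2]; ring

lemma normsq (x : EuclideanSpace ℝ (Fin 6)) :
    ‖x‖ ^ 2 = x 0^2 + x 1^2 + x 2^2 + x 3^2 + x 4^2 + x 5^2 := by
  rw [EuclideanSpace.norm_eq, Real.sq_sqrt (by positivity)]
  simp only [Fin.sum_univ_six, Real.norm_eq_abs, sq_abs]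

lemma Tnorm (x : EuclideanSpace ℝ (Fin 6)) : ‖Tfun x‖ = ‖x‖ := by
  have h1 : ‖Tfun x‖ ^ 2 = ‖x‖ ^ 2 := by
    rw [normsq, normsq]
    show ((x 0 + x 5)/Real.sqrt 2)^2 + ((x 1 - x 4)/Real.sqrt 2)^2 +
      ((x 2 + x 3)/Real.sqrt 2)^2 + ((x 0 - x 5)/Real.sqrt 2)^2 +
      ((x 1 + x 4)/Real.sqrt 2)^2 + ((x 2 - x 3)/Real.sqrt 2)^2 = _
    simp only [div_pow, s2]
    ring
  calc ‖Tfun x‖ = Real.sqrt (‖Tfun x‖ ^ 2) := (Real.sqrt_sq (norm_nonneg _)).symm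
    _ = Real.sqrt (‖x‖ ^ 2) := by rw [h1]
    _ = ‖x‖ := Real.sqrt_sq (norm_nonneg _)

/-- `Tfun` as a linear isometry equivalence, i.e. an element of `O(6)`. -/
noncomputable def Aeq : EuclideanSpace ℝ (Fin 6) ≃ₗᵢ[ℝ] EuclideanSpace ℝ (Fin 6) :=
{ toFun := Tfun
  invFun := Sfun
  map_add' := Tadd
  map_smul' := Tsmul
  left_inv := STx
  right_inv := TSy
  norm_map' := Tnorm }

/-- `S²(1/√2) × S²(1/√2)` is congruent in `S⁵` to the set of singular `4 × 4`
skew-symmetric matrices of unit norm: some orthogonal transformation `A ∈ O(6)` of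
`ℝ⁶` maps `{x ∈ S⁵ : x₁x₆ − x₂x₅ + x₃x₄ = 0}` onto
`{x ∈ S⁵ : x₁² + x₂² + x₃² = 1/2 ∧ x₄² + x₅² + x₆² = 1/2}`. -/
theorem sphereProd_congruent_pfaffian_zero :
    ∃ A : EuclideanSpace ℝ (Fin 6) ≃ₗᵢ[ℝ] EuclideanSpace ℝ (Fin 6),
      A '' {x : EuclideanSpace ℝ (Fin 6) | ‖x‖ = 1 ∧
              x 0 * x 5 - x 1 * x 4 + x 2 * x 3 = 0} =
        {x : EuclideanSpace ℝ (Fin 6) | ‖x‖ = 1 ∧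
          x 0 ^ 2 + x 1 ^ 2 + x 2 ^ 2 = 1 / 2 ∧ x 3 ^ 2 + x 4 ^ 2 + x 5 ^ 2 = 1 / 2} := by
  refine ⟨Aeq, ?_⟩
  ext y
  constructor
  · rintro ⟨x, ⟨hn, hpf⟩, rfl⟩
    have hn2 : x 0^2 + x 1^2 + x 2^2 + x 3^2 + x 4^2 + x 5^2 = 1 := by
      rw [← normsq, hn]; norm_num
    have hAn : ‖Aeq x‖ = 1 := by rw [Aeq.norm_map, hn]
    have e0 : Aeq x 0 = (x 0 + x 5)/Real.sqrt 2 := rfl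
    have e1 : Aeq x 1 = (x 1 - x 4)/Real.sqrt 2 := rfl
    have e2 : Aeq x 2 = (x 2 + x 3)/Real.sqrt 2 := rfl
    have e3 : Aeq x 3 = (x 0 - x 5)/Real.sqrt 2 := rfl
    have e4 : Aeq x 4 = (x 1 + x 4)/Real.sqrt 2 := rfl
    have e5 : Aeq x 5 = (x 2 - x 3)/Real.sqrt 2 := rfl
    refine ⟨hAn, ?_, ?_⟩
    · rw [e0, e1, e2]
      simp only [div_pow, s2]
      linear_combination hn2/2 + hpf
    · rw [e3, e4, e5]
      simp only [div_pow, s2]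
      linear_combination hn2/2 - hpf
  · rintro ⟨hn, h1, h2⟩
    refine ⟨Sfun y, ⟨?_, ?_⟩, ?_⟩
    · have hS : ‖Sfun y‖ = ‖Tfun (Sfun y)‖ := (Tnorm _).symm
      rw [hS, TSy, hn]
    · show (y 0 + y 3)/Real.sqrt 2 * ((y 0 - y 3)/Real.sqrt 2) -
        (y 1 + y 4)/Real.sqrt 2 * ((y 4 - y 1)/Real.sqrt 2) +
        (y 2 + y 5)/Real.sqrt 2 * ((y 2 - y 5)/Real.sqrt 2) = 0
      rw [div_mul_div_comm, div_mul_div_comm, div_mul_div_comm, smul2]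
      linear_combination h1/2 - h2/2
    · exact TSy y
end
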